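/- Let n ≥ 2, i ∈ {0,1,…,n} and j ∈ {2,…,n}. The subdigraph of the star digraph ST⃗_{n+1} induced on V_{i,j} = {σ ∈ Alt_{n+1} : σ(j) = i} is isomorphic (as a digraph) to ST⃗_n when n − i + j is even, and is isomorphic to the reverse digraph of ST⃗_n (the digraph obtained from ST⃗_n by reversing every arc) when n − i + j is odd. -/

import Mathlib

/-- The 3-cycle `gᵢ` determined by `gᵢ 0 = i`, `gᵢ i = 1`, `gᵢ 1 = 0`. -/
def gcyc {m : ℕ} [NeZero m] (i : Fin m) : Equiv.Perm (Fin m) :=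
  Equiv.swap 1 i * Equiv.swap 0 1

/-- Vertices of the star digraph `ST⃗_m`: the even permutations of `{0, …, m-1}`. -/
abbrev StarVertex (m : ℕ) := {σ : Equiv.Perm (Fin m) // σ ∈ alternatingGroup (Fin m)}

/-- The arc relation of the star digraph `ST⃗_m`: there is an arc from `σ` to `σ ∘ gᵢ`
for each `i ∈ {2, …, m-1}`. -/
def starArc {m : ℕ} [NeZero m] (σ τ : StarVertex m) : Prop :=
  ∃ i : Fin m, 2 ≤ i.val ∧ (τ : Equiv.Perm (Fin m)) = (σ : Equiv.Perm (Fin m)) * gcyc i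

/-- The set `V_{i,j} = {σ ∈ Alt_m : σ j = i}`. -/
def Vset (m : ℕ) (i j : Fin m) : Set (StarVertex m) :=
  {σ | (σ : Equiv.Perm (Fin m)) j = i}

section Aux

open Equiv Equiv.Perm

variable {m : ℕ}

lemma star4_ne_zero {x : Fin (m + 2)} (hx : 2 ≤ x.val) : x ≠ 0 := by
  intro h; subst h; simp at hx

lemma star4_ne_one {x : Fin (m + 2)} (hx : 2 ≤ x.val) : x ≠ 1 := by
  intro h; subst h; rw [Fin.val_one] at hx; omega

lemma star4_zero_ne_one : (0 : Fin (m + 2)) ≠ 1 :=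
  Fin.ne_of_val_ne (by simp)

lemma gcyc_zero (k : Fin (m + 2)) : gcyc k 0 = k := by
  simp [gcyc, Equiv.Perm.mul_apply]

lemma gcyc_one {k : Fin (m + 2)} (h0 : k ≠ 0) : gcyc k 1 = 0 := by
  simp only [gcyc, Equiv.Perm.mul_apply, Equiv.swap_apply_right]
  exact Equiv.swap_apply_of_ne_of_ne star4_zero_ne_one (Ne.symm h0)

lemma gcyc_self {k : Fin (m + 2)} (h0 : k ≠ 0) (h1 : k ≠ 1) : gcyc k k = 1 := by
  simp only [gcyc, Equiv.Perm.mul_apply]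
  rw [Equiv.swap_apply_of_ne_of_ne h0 h1, Equiv.swap_apply_right]

lemma gcyc_other {k x : Fin (m + 2)} (h0 : x ≠ 0) (h1 : x ≠ 1) (hk : x ≠ k) : gcyc k x = x := by
  simp only [gcyc, Equiv.Perm.mul_apply]
  rw [Equiv.swap_apply_of_ne_of_ne h0 h1, Equiv.swap_apply_of_ne_of_ne h1 hk]

lemma sign_gcyc {k : Fin (m + 2)} (h0 : k ≠ 0) (h1 : k ≠ 1) : Equiv.Perm.sign (gcyc k) = 1 := by
  rw [gcyc, map_mul, Equiv.Perm.sign_swap (Ne.symm h1), Equiv.Perm.sign_swap star4_zero_ne_one]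
  simp

lemma swap_gcyc_swap {k : Fin (m + 2)} (hk : 2 ≤ k.val) :
    Equiv.swap 0 1 * gcyc k * Equiv.swap 0 1 = (gcyc k)⁻¹ := by
  have h0 : k ≠ 0 := star4_ne_zero hk
  have h1 := star4_ne_one hk
  have key : gcyc k * (Equiv.swap 0 1 * gcyc k * Equiv.swap 0 1) = 1 := by
    ext x
    simp only [Equiv.Perm.mul_apply, Equiv.Perm.one_apply]
    by_cases hx0 : x = 0
    · subst hx0
      rw [Equiv.swap_apply_left, gcyc_one h0, Equiv.swap_apply_left, gcyc_one h0]
    by_cases hx1 : x = 1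
    · subst hx1
      rw [Equiv.swap_apply_right, gcyc_zero, Equiv.swap_apply_of_ne_of_ne h0 h1,
        gcyc_self h0 h1]
    by_cases hxk : x = k
    · subst hxk
      rw [Equiv.swap_apply_of_ne_of_ne h0 h1, gcyc_self h0 h1, Equiv.swap_apply_right,
        gcyc_zero]
    · rw [Equiv.swap_apply_of_ne_of_ne hx0 hx1, gcyc_other hx0 hx1 hxk,
        Equiv.swap_apply_of_ne_of_ne hx0 hx1, gcyc_other hx0 hx1 hxk]
  exact (inv_eq_of_mul_eq_one_right key).symm

lemma star4_sA0 {j : Fin (m + 3)} (hj : 2 ≤ j.val) : j.succAbove (0 : Fin (m + 2)) = 0 := by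
  rw [Fin.succAbove_of_castSucc_lt _ _ (by rw [Fin.castSucc_zero]; exact Fin.lt_def.mpr (by show 0 < j.val; omega))]
  exact Fin.castSucc_zero

lemma star4_sA1 {j : Fin (m + 3)} (hj : 2 ≤ j.val) : j.succAbove (1 : Fin (m + 2)) = 1 := by
  rw [Fin.succAbove_of_castSucc_lt _ _ (by rw [Fin.castSucc_one]; exact Fin.lt_def.mpr (by simp; omega))]
  exact Fin.castSucc_one

lemma star4_le_sA (p : Fin (m + 3)) (x : Fin (m + 2)) : x.val ≤ (p.succAbove x).val := by
  by_cases h : x.castSucc < p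
  · rw [Fin.succAbove_of_castSucc_lt _ _ h, Fin.coe_castSucc]
  · rw [Fin.succAbove_of_le_castSucc _ _ (le_of_not_gt h), Fin.val_succ]; omega

lemma star4_sA_gcyc {j : Fin (m + 3)} (hj : 2 ≤ j.val) {k : Fin (m + 2)} (hk : 2 ≤ k.val)
    (x : Fin (m + 2)) :
    j.succAbove (gcyc k x) = gcyc (j.succAbove k) (j.succAbove x) := by
  have hK : 2 ≤ (j.succAbove k).val := le_trans hk (star4_le_sA j k)
  have hK0 : j.succAbove k ≠ 0 := by
    intro h; rw [h] at hK; simp at hK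
  have hK1 : j.succAbove k ≠ 1 := by
    intro h; rw [h] at hK; rw [Fin.val_one] at hK; omega
  by_cases hx0 : x = 0
  · subst hx0; rw [gcyc_zero, star4_sA0 hj, gcyc_zero]
  by_cases hx1 : x = 1
  · subst hx1
    rw [gcyc_one (star4_ne_zero hk), star4_sA0 hj, star4_sA1 hj, gcyc_one hK0]
  by_cases hxk : x = k
  · subst hxk
    rw [gcyc_self (star4_ne_zero hk) (star4_ne_one hk), star4_sA1 hj, gcyc_self hK0 hK1]
  · rw [gcyc_other hx0 hx1 hxk]
    rw [gcyc_other]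
    · intro h; rw [← star4_sA0 (j := j) hj] at h
      exact hx0 (Fin.succAbove_right_injective h)
    · intro h; rw [← star4_sA1 (j := j) hj] at h
      exact hx1 (Fin.succAbove_right_injective h)
    · intro h; exact hxk (Fin.succAbove_right_injective h)

lemma star4_succAbove_fSAE_symm (p : Fin (m + 1)) (s : {x : Fin (m + 1) // x ≠ p}) :
    p.succAbove ((finSuccAboveEquiv p).symm s) = s.val := by
  conv_rhs => rw [← (finSuccAboveEquiv p).apply_symm_apply s]
  rw [finSuccAboveEquiv_apply]

end Aux

section Prm

open Equiv Equiv.Perm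

/-- Relabelling of a permutation sending `j` to `i` as a permutation of `Fin (n+2)`. -/
def prm (n : ℕ) (i j : Fin (n + 3)) (σ : Equiv.Perm (Fin (n + 3))) (h : σ j = i) :
    Equiv.Perm (Fin (n + 2)) :=
  (finSuccAboveEquiv j).trans
    ((Equiv.subtypeEquiv (p := (· ≠ j)) (q := (· ≠ i)) σ
      (fun a => not_congr ⟨fun e => by rw [e]; exact h,
        fun e => σ.injective (by rw [e, h])⟩)).trans
    (finSuccAboveEquiv i).symm)

variable {n : ℕ} (i j : Fin (n + 3))

lemma prm_spec (σ : Equiv.Perm (Fin (n + 3))) (h : σ j = i) (x : Fin (n + 2)) :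
    i.succAbove (prm n i j σ h x) = σ (j.succAbove x) := by
  show i.succAbove ((finSuccAboveEquiv i).symm
    ((Equiv.subtypeEquiv (p := (· ≠ j)) (q := (· ≠ i)) σ _) ((finSuccAboveEquiv j) x))) = _
  rw [star4_succAbove_fSAE_symm]
  simp [finSuccAboveEquiv_apply, Equiv.subtypeEquiv_apply]

lemma prm_congr {σ τ : Equiv.Perm (Fin (n + 3))} (e : σ = τ) (hσ : σ j = i) (hτ : τ j = i) :
    prm n i j σ hσ = prm n i j τ hτ := by subst e; rfl

lemma prm_injective (σ τ : Equiv.Perm (Fin (n + 3))) (hσ : σ j = i) (hτ : τ j = i)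
    (h : prm n i j σ hσ = prm n i j τ hτ) : σ = τ := by
  ext1 x
  by_cases hx : x = j
  · subst hx; rw [hσ, hτ]
  · obtain ⟨y, hy⟩ := Fin.exists_succAbove_eq hx
    rw [← hy, ← prm_spec i j σ hσ, h, prm_spec]

lemma prm_mul_gcyc (hj : 2 ≤ j.val) (σ : Equiv.Perm (Fin (n + 3))) (h : σ j = i)
    (k' : Fin (n + 2)) (hk' : 2 ≤ k'.val) (h2 : (σ * gcyc (j.succAbove k')) j = i) :
    prm n i j (σ * gcyc (j.succAbove k')) h2 = prm n i j σ h * gcyc k' := by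
  ext1 x
  apply Fin.succAbove_right_injective (p := i)
  rw [prm_spec, Equiv.Perm.mul_apply, Equiv.Perm.mul_apply, prm_spec, ← star4_sA_gcyc hj hk']

lemma prm_mul_fix (σ : Equiv.Perm (Fin (n + 3))) (h : σ j = i) (D : Equiv.Perm (Fin (n + 3)))
    (hD : D j = j) (h2 : (σ * D) j = i) :
    prm n i j (σ * D) h2 = prm n i j σ h * prm n j j D hD := by
  ext1 x
  apply Fin.succAbove_right_injective (p := i)
  rw [prm_spec, Equiv.Perm.mul_apply, Equiv.Perm.mul_apply, prm_spec, prm_spec]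

lemma star4_extendDomain_fix (ρ : Equiv.Perm (Fin (n + 2))) :
    (ρ.extendDomain (finSuccAboveEquiv j)) j = j :=
  Equiv.Perm.extendDomain_apply_not_subtype _ _ (by simp)

lemma star4_extendDomain_sA (ρ : Equiv.Perm (Fin (n + 2))) (x : Fin (n + 2)) :
    (ρ.extendDomain (finSuccAboveEquiv j)) (j.succAbove x) = j.succAbove (ρ x) := by
  simpa [finSuccAboveEquiv_apply] using
    Equiv.Perm.extendDomain_apply_image ρ (finSuccAboveEquiv j) x

lemma prm_extendDomain (ρ : Equiv.Perm (Fin (n + 2)))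
    (hfix : (ρ.extendDomain (finSuccAboveEquiv j)) j = j) :
    prm n j j (ρ.extendDomain (finSuccAboveEquiv j)) hfix = ρ := by
  ext1 x
  apply Fin.succAbove_right_injective (p := j)
  rw [prm_spec, star4_extendDomain_sA]

lemma star4_fix_eq_extendDomain (D : Equiv.Perm (Fin (n + 3))) (hD : D j = j) :
    D = (prm n j j D hD).extendDomain (finSuccAboveEquiv j) := by
  ext1 x
  by_cases hx : x = j
  · subst hx; rw [hD, star4_extendDomain_fix]
  · obtain ⟨y, hy⟩ := Fin.exists_succAbove_eq hx
    rw [← hy, star4_extendDomain_sA, prm_spec]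

lemma sign_prm_fix (D : Equiv.Perm (Fin (n + 3))) (hD : D j = j) :
    Equiv.Perm.sign (prm n j j D hD) = Equiv.Perm.sign D := by
  conv_rhs => rw [star4_fix_eq_extendDomain j D hD]
  rw [Equiv.Perm.sign_extendDomain]

lemma sign_prm_ratio (σ τ : Equiv.Perm (Fin (n + 3))) (hσ : σ j = i) (hτ : τ j = i) :
    Equiv.Perm.sign (prm n i j σ hσ) * Equiv.Perm.sign σ
      = Equiv.Perm.sign (prm n i j τ hτ) * Equiv.Perm.sign τ := by
  have hD : (σ⁻¹ * τ) j = j := by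
    rw [Equiv.Perm.mul_apply, hτ, ← hσ, Equiv.Perm.inv_def, Equiv.symm_apply_apply]
  have hτ' : τ = σ * (σ⁻¹ * τ) := (mul_inv_cancel_left σ τ).symm
  have key : ∀ (ρ : Equiv.Perm (Fin (n + 3))) (hρ : ρ j = i), ρ = σ * (σ⁻¹ * τ) →
      Equiv.Perm.sign (prm n i j ρ hρ)
        = Equiv.Perm.sign (prm n i j σ hσ) * Equiv.Perm.sign (σ⁻¹ * τ) := by
    rintro ρ hρ rfl
    rw [prm_mul_fix i j σ hσ _ hD, map_mul, sign_prm_fix]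
  rw [key τ hτ hτ']
  have hsτ : Equiv.Perm.sign τ = Equiv.Perm.sign σ * Equiv.Perm.sign (σ⁻¹ * τ) := by
    rw [← map_mul, mul_inv_cancel_left]
  rw [hsτ, mul_mul_mul_comm, Int.units_mul_self, mul_one]

end Prm

section Fmap

open Equiv Equiv.Perm

lemma star4_gcgc {m : ℕ} {k : Fin (m + 2)} (hk : 2 ≤ k.val) :
    gcyc k * (Equiv.swap 0 1 * gcyc k) = Equiv.swap 0 1 := by
  have h0 : k ≠ 0 := star4_ne_zero hk
  have h1 : k ≠ 1 := star4_ne_one hk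
  ext x
  simp only [Equiv.Perm.mul_apply]
  by_cases hx0 : x = 0
  · subst hx0
    rw [gcyc_zero, Equiv.swap_apply_of_ne_of_ne h0 h1, gcyc_self h0 h1, Equiv.swap_apply_left]
  by_cases hx1 : x = 1
  · subst hx1
    rw [gcyc_one h0, Equiv.swap_apply_left, gcyc_one h0, Equiv.swap_apply_right]
  by_cases hxk : x = k
  · subst hxk
    rw [gcyc_self h0 h1, Equiv.swap_apply_right, gcyc_zero,
      Equiv.swap_apply_of_ne_of_ne h0 h1]
  · simp only [gcyc_other hx0 hx1 hxk, Equiv.swap_apply_of_ne_of_ne hx0 hx1]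

lemma star4_conj_mul_gcyc {m : ℕ} (z : Equiv.Perm (Fin (m + 2))) {k : Fin (m + 2)}
    (hk : 2 ≤ k.val) :
    Equiv.swap 0 1 * (z * gcyc k) * Equiv.swap 0 1 * gcyc k
      = Equiv.swap 0 1 * z * Equiv.swap 0 1 := by
  simp only [mul_assoc]
  rw [star4_gcgc hk]

lemma star4_conj_arc_iff {m : ℕ} (x y : Equiv.Perm (Fin (m + 2))) {k : Fin (m + 2)}
    (hk : 2 ≤ k.val) :
    y = x * gcyc k ↔
      Equiv.swap 0 1 * x * Equiv.swap 0 1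
        = Equiv.swap 0 1 * y * Equiv.swap 0 1 * gcyc k := by
  constructor
  · rintro rfl
    exact (star4_conj_mul_gcyc x hk).symm
  · intro h
    have h2 : Equiv.swap 0 1 * y * Equiv.swap 0 1 * gcyc k
        = Equiv.swap 0 1 * (y * (gcyc k)⁻¹) * Equiv.swap 0 1 := by
      have := star4_conj_mul_gcyc (y * (gcyc k)⁻¹) hk
      rwa [inv_mul_cancel_right] at this
    rw [h2] at h
    have h3 : x = y * (gcyc k)⁻¹ :=
      mul_left_cancel (mul_right_cancel h)
    rw [h3, inv_mul_cancel_right]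

variable (n : ℕ) (i j : Fin (n + 3))

/-- The vertex map realizing the isomorphism. -/
def Fmap (a : ↥(Vset (n + 3) i j)) : StarVertex (n + 2) :=
  if hs : Equiv.Perm.sign (prm n i j (a.1 : Equiv.Perm (Fin (n + 3))) a.2) = 1 then
    ⟨prm n i j (a.1 : Equiv.Perm (Fin (n + 3))) a.2, Equiv.Perm.mem_alternatingGroup.mpr hs⟩
  else
    ⟨Equiv.swap 0 1 * prm n i j (a.1 : Equiv.Perm (Fin (n + 3))) a.2,
      Equiv.Perm.mem_alternatingGroup.mpr (by
        rcases Int.units_eq_one_or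
          (Equiv.Perm.sign (prm n i j (a.1 : Equiv.Perm (Fin (n + 3))) a.2)) with h | h
        · exact absurd h hs
        · rw [map_mul, h, Equiv.Perm.sign_swap star4_zero_ne_one]; decide)⟩

lemma Fmap_coe_mul (hj : 2 ≤ j.val) (a b : ↥(Vset (n + 3) i j)) (k' : Fin (n + 2))
    (hk' : 2 ≤ k'.val)
    (hab : (b.1 : Equiv.Perm (Fin (n + 3))) = (a.1 : Equiv.Perm (Fin (n + 3))) * gcyc (j.succAbove k')) :
    ((Fmap n i j b : StarVertex (n + 2)) : Equiv.Perm (Fin (n + 2)))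
      = ((Fmap n i j a : StarVertex (n + 2)) : Equiv.Perm (Fin (n + 2))) * gcyc k' := by
  have h2 : ((a.1 : Equiv.Perm (Fin (n + 3))) * gcyc (j.succAbove k')) j = i := by
    rw [← hab]; exact b.2
  have hpb : prm n i j (b.1 : Equiv.Perm (Fin (n + 3))) b.2
      = prm n i j (a.1 : Equiv.Perm (Fin (n + 3))) a.2 * gcyc k' := by
    rw [prm_congr i j hab b.2 h2, prm_mul_gcyc i j hj _ a.2 k' hk']
  have hg : Equiv.Perm.sign (gcyc k') = 1 := sign_gcyc (star4_ne_zero hk') (star4_ne_one hk')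
  have hsb : Equiv.Perm.sign (prm n i j (b.1 : Equiv.Perm (Fin (n + 3))) b.2)
      = Equiv.Perm.sign (prm n i j (a.1 : Equiv.Perm (Fin (n + 3))) a.2) := by
    rw [hpb, map_mul, hg, mul_one]
  by_cases hs : Equiv.Perm.sign (prm n i j (a.1 : Equiv.Perm (Fin (n + 3))) a.2) = 1
  · simp only [Fmap, dif_pos hs, dif_pos (hsb.trans hs)]
    exact hpb
  · simp only [Fmap, dif_neg hs, dif_neg (show ¬_ from fun hh => hs (hsb.symm.trans hh))]
    rw [hpb, mul_assoc]

lemma Fmap_injective : Function.Injective (Fmap n i j) := by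
  intro a b h
  have hsig : Equiv.Perm.sign (prm n i j (a.1 : Equiv.Perm (Fin (n + 3))) a.2)
      = Equiv.Perm.sign (prm n i j (b.1 : Equiv.Perm (Fin (n + 3))) b.2) := by
    have hr := sign_prm_ratio i j (a.1 : Equiv.Perm (Fin (n + 3))) (b.1 : Equiv.Perm (Fin (n + 3))) a.2 b.2
    rw [Equiv.Perm.mem_alternatingGroup.mp a.1.2, Equiv.Perm.mem_alternatingGroup.mp b.1.2,
      mul_one, mul_one] at hr
    exact hr
  have hval := congrArg Subtype.val h
  have hprm : prm n i j (a.1 : Equiv.Perm (Fin (n + 3))) a.2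
      = prm n i j (b.1 : Equiv.Perm (Fin (n + 3))) b.2 := by
    by_cases hs : Equiv.Perm.sign (prm n i j (a.1 : Equiv.Perm (Fin (n + 3))) a.2) = 1
    · simp only [Fmap, dif_pos hs, dif_pos (hsig.symm.trans hs)] at hval
      exact hval
    · simp only [Fmap, dif_neg hs,
        dif_neg (show ¬_ from fun hh => hs (hsig.trans hh))] at hval
      exact mul_left_cancel hval
  exact Subtype.ext (Subtype.ext (prm_injective i j _ _ a.2 b.2 hprm))

lemma Fmap_surjective (hj : 2 ≤ j.val) : Function.Surjective (Fmap n i j) := by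
  have hj0 : j ≠ 0 := star4_ne_zero hj
  have hj1 : j ≠ 1 := star4_ne_one hj
  have hσ₀ : (Equiv.swap i j * Equiv.swap 0 1 : Equiv.Perm (Fin (n + 3))) j = i := by
    rw [Equiv.Perm.mul_apply, Equiv.swap_apply_of_ne_of_ne hj0 hj1, Equiv.swap_apply_right]
  set σ₀ : Equiv.Perm (Fin (n + 3)) := Equiv.swap i j * Equiv.swap 0 1 with hσ₀def
  set κ : ℤˣ := Equiv.Perm.sign (prm n i j σ₀ hσ₀) * Equiv.Perm.sign σ₀ with hκdef
  have self_inv : ∀ u : ℤˣ, u⁻¹ = u := fun u => inv_eq_of_mul_eq_one_right (Int.units_mul_self u)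
  have ratio : ∀ (σ : Equiv.Perm (Fin (n + 3))) (hσ : σ j = i),
      Equiv.Perm.sign (prm n i j σ hσ) = κ * Equiv.Perm.sign σ := by
    intro σ hσ
    have h := sign_prm_ratio i j σ σ₀ hσ hσ₀
    calc Equiv.Perm.sign (prm n i j σ hσ)
        = Equiv.Perm.sign (prm n i j σ hσ) * (Equiv.Perm.sign σ * Equiv.Perm.sign σ) := by
          rw [Int.units_mul_self, mul_one]
      _ = (Equiv.Perm.sign (prm n i j σ hσ) * Equiv.Perm.sign σ) * Equiv.Perm.sign σ := by
          rw [mul_assoc]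
      _ = κ * Equiv.Perm.sign σ := by rw [h, hκdef]
  have build : ∀ ρ : Equiv.Perm (Fin (n + 2)), ∃ (σ : Equiv.Perm (Fin (n + 3))) (hσ : σ j = i),
      prm n i j σ hσ = ρ ∧ Equiv.Perm.sign σ = κ * Equiv.Perm.sign ρ := by
    intro ρ
    have hDfix : (((prm n i j σ₀ hσ₀)⁻¹ * ρ).extendDomain (finSuccAboveEquiv j)) j = j :=
      star4_extendDomain_fix j _
    refine ⟨σ₀ * ((prm n i j σ₀ hσ₀)⁻¹ * ρ).extendDomain (finSuccAboveEquiv j), ?_, ?_, ?_⟩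
    · rw [Equiv.Perm.mul_apply, hDfix, hσ₀]
    · rw [prm_mul_fix i j σ₀ hσ₀ _ hDfix, prm_extendDomain j _ hDfix, mul_inv_cancel_left]
    · have hsD : Equiv.Perm.sign (((prm n i j σ₀ hσ₀)⁻¹ * ρ).extendDomain (finSuccAboveEquiv j))
          = Equiv.Perm.sign (prm n i j σ₀ hσ₀) * Equiv.Perm.sign ρ := by
        rw [Equiv.Perm.sign_extendDomain, map_mul, map_inv, self_inv]
      rw [map_mul Equiv.Perm.sign σ₀
        (((prm n i j σ₀ hσ₀)⁻¹ * ρ).extendDomain (finSuccAboveEquiv j)), hsD, hκdef,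
        mul_left_comm, ← mul_assoc]
  intro τ
  rcases Int.units_eq_one_or κ with hκ1 | hκ1
  · obtain ⟨σ, hσ, hprm, hsgn⟩ := build (τ : Equiv.Perm (Fin (n + 2)))
    have hσeven : σ ∈ alternatingGroup (Fin (n + 3)) := by
      rw [Equiv.Perm.mem_alternatingGroup, hsgn, hκ1, one_mul]
      exact Equiv.Perm.mem_alternatingGroup.mp τ.2
    refine ⟨⟨⟨σ, hσeven⟩, hσ⟩, Subtype.ext ?_⟩
    have hcond : Equiv.Perm.sign (prm n i j σ hσ) = 1 := by
      rw [hprm]; exact Equiv.Perm.mem_alternatingGroup.mp τ.2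
    simp only [Fmap, dif_pos hcond]
    exact hprm
  · obtain ⟨σ, hσ, hprm, hsgn⟩ := build (Equiv.swap 0 1 * (τ : Equiv.Perm (Fin (n + 2))))
    have hsρ : Equiv.Perm.sign (Equiv.swap 0 1 * (τ : Equiv.Perm (Fin (n + 2)))) = -1 := by
      rw [map_mul, Equiv.Perm.sign_swap star4_zero_ne_one,
        Equiv.Perm.mem_alternatingGroup.mp τ.2, mul_one]
    have hσeven : σ ∈ alternatingGroup (Fin (n + 3)) := by
      rw [Equiv.Perm.mem_alternatingGroup, hsgn, hκ1, hsρ]; decide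
    refine ⟨⟨⟨σ, hσeven⟩, hσ⟩, Subtype.ext ?_⟩
    have hcond : ¬ Equiv.Perm.sign (prm n i j σ hσ) = 1 := by
      rw [hprm, hsρ]; decide
    simp only [Fmap, dif_neg hcond]
    rw [hprm, ← mul_assoc, Equiv.swap_mul_self, one_mul]

lemma star4_central (hj : 2 ≤ j.val) (a b : ↥(Vset (n + 3) i j)) :
    starArc a.1 b.1 ↔ ∃ k' : Fin (n + 2), 2 ≤ k'.val ∧
      ((Fmap n i j b : StarVertex (n + 2)) : Equiv.Perm (Fin (n + 2)))
        = ((Fmap n i j a : StarVertex (n + 2)) : Equiv.Perm (Fin (n + 2))) * gcyc k' := by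
  constructor
  · rintro ⟨k, hk, hb⟩
    have hkj : k ≠ j := by
      intro hkj
      have hbj : (b.1 : Equiv.Perm (Fin (n + 3))) j = i := b.2
      rw [hb, Equiv.Perm.mul_apply, hkj,
        gcyc_self (star4_ne_zero hj) (star4_ne_one hj)] at hbj
      have h2 : (a.1 : Equiv.Perm (Fin (n + 3))) (1 : Fin (n + 3))
          = (a.1 : Equiv.Perm (Fin (n + 3))) j := hbj.trans (a.2 : _).symm
      exact star4_ne_one hj ((a.1 : Equiv.Perm (Fin (n + 3))).injective h2).symm
    obtain ⟨k', hk'⟩ := Fin.exists_succAbove_eq hkj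
    have hk'2 : 2 ≤ k'.val := by
      by_contra hc
      push_neg at hc
      rcases (by omega : k'.val = 0 ∨ k'.val = 1) with h0 | h1
      · have hz : k' = 0 := Fin.ext (by simp [h0])
        rw [hz, star4_sA0 hj] at hk'
        rw [← hk'] at hk; simp at hk
      · have hz : k' = 1 := Fin.ext (by simp [h1])
        rw [hz, star4_sA1 hj] at hk'
        rw [← hk'] at hk; rw [Fin.val_one] at hk; omega
    exact ⟨k', hk'2, Fmap_coe_mul n i j hj a b k' hk'2 (by rw [hb, hk'])⟩
  · rintro ⟨k', hk', hF⟩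
    have hk2 : 2 ≤ (j.succAbove k').val := le_trans hk' (star4_le_sA j k')
    have hgj : gcyc (j.succAbove k') j = j :=
      gcyc_other (star4_ne_zero hj) (star4_ne_one hj) (Fin.ne_succAbove j k')
    have hb2even : (a.1 : Equiv.Perm (Fin (n + 3))) * gcyc (j.succAbove k')
        ∈ alternatingGroup (Fin (n + 3)) :=
      mul_mem a.1.2 (Equiv.Perm.mem_alternatingGroup.mpr
        (sign_gcyc (star4_ne_zero hk2) (star4_ne_one hk2)))
    have hb2mem : ((a.1 : Equiv.Perm (Fin (n + 3))) * gcyc (j.succAbove k')) j = i := by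
      rw [Equiv.Perm.mul_apply, hgj]; exact a.2
    have hFB : Fmap n i j ⟨⟨_, hb2even⟩, hb2mem⟩ = Fmap n i j b := by
      apply Subtype.ext
      rw [Fmap_coe_mul n i j hj a ⟨⟨_, hb2even⟩, hb2mem⟩ k' hk' rfl, hF]
    have hBb : (⟨⟨_, hb2even⟩, hb2mem⟩ : ↥(Vset (n + 3) i j)) = b := Fmap_injective n i j hFB
    exact ⟨j.succAbove k', hk2, by rw [← hBb]⟩

/-- Conjugation by `swap 0 1`, an involutive permutation of `StarVertex (m+2)`. -/
def conjC (m : ℕ) : StarVertex (m + 2) ≃ StarVertex (m + 2) where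
  toFun τ := ⟨Equiv.swap 0 1 * (τ : Equiv.Perm (Fin (m + 2))) * Equiv.swap 0 1, by
    rw [Equiv.Perm.mem_alternatingGroup, map_mul, map_mul,
      Equiv.Perm.sign_swap star4_zero_ne_one, Equiv.Perm.mem_alternatingGroup.mp τ.2]
    decide⟩
  invFun τ := ⟨Equiv.swap 0 1 * (τ : Equiv.Perm (Fin (m + 2))) * Equiv.swap 0 1, by
    rw [Equiv.Perm.mem_alternatingGroup, map_mul, map_mul,
      Equiv.Perm.sign_swap star4_zero_ne_one, Equiv.Perm.mem_alternatingGroup.mp τ.2]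
    decide⟩
  left_inv τ := Subtype.ext (by
    ext x
    simp [Equiv.Perm.mul_apply])
  right_inv τ := Subtype.ext (by
    ext x
    simp [Equiv.Perm.mul_apply])

end Fmap


/-- For `n ≥ 2` (here written `n + 2`), `i ∈ {0, …, n}` and `j ∈ {2, …, n}`: the subdigraph
of `ST⃗_{n+1}` induced on `V_{i,j}` is isomorphic to `ST⃗_n` when `n - i + j` is even, and
isomorphic to the reverse of `ST⃗_n` when `n - i + j` is odd. -/
theorem stmt4 (n : ℕ) (i j : Fin (n + 3)) (hj : 2 ≤ j.val) :
    (Even ((n : ℤ) + 2 - (i : ℕ) + (j : ℕ)) →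
      ∃ f : ↥(Vset (n + 3) i j) ≃ StarVertex (n + 2),
        ∀ a b : ↥(Vset (n + 3) i j), starArc a.1 b.1 ↔ starArc (f a) (f b)) ∧
    (Odd ((n : ℤ) + 2 - (i : ℕ) + (j : ℕ)) →
      ∃ f : ↥(Vset (n + 3) i j) ≃ StarVertex (n + 2),
        ∀ a b : ↥(Vset (n + 3) i j), starArc a.1 b.1 ↔ starArc (f b) (f a)) := by
  have hFbij : Function.Bijective (Fmap n i j) :=
    ⟨Fmap_injective n i j, Fmap_surjective n i j hj⟩
  constructor
  · intro _
    exact ⟨Equiv.ofBijective _ hFbij, fun a b => star4_central n i j hj a b⟩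
  · intro _
    refine ⟨(Equiv.ofBijective _ hFbij).trans (conjC n), fun a b => ?_⟩
    rw [star4_central n i j hj a b]
    constructor
    · rintro ⟨k', hk', h⟩
      exact ⟨k', hk', (star4_conj_arc_iff _ _ hk').mp h⟩
    · rintro ⟨k', hk', h⟩
      exact ⟨k', hk', (star4_conj_arc_iff _ _ hk').mpr h⟩
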